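/- For 0 < ε < 1 and every real y, the diagonal of the Hermite-function kernel satisfies ∑_{n=0}^∞ ε^n h_n(y)^2 = (1/√((1−ε²)π)) · exp( ((ε−1)/(ε+1)) y² ); in particular the series converges. -/

import Mathlib

open Nat Finset Real MeasureTheory

/-- The physicists' Hermite polynomial, via its explicit formula. -/
noncomputable def hermiteR (n : ℕ) (x : ℝ) : ℝ :=
  (n ! : ℝ) * ∑ m ∈ Finset.range (n / 2 + 1),
    (-1) ^ m * (2 * x) ^ (n - 2 * m) / ((m ! : ℝ) * ((n - 2 * m)! : ℝ))

/-- The normalized Hermite function `h_n(x) = (n! 2^n √π)^{-1/2} H_n(x) e^{-x²/2}`. -/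
noncomputable def hermiteFunR (n : ℕ) (x : ℝ) : ℝ :=
  ((n ! : ℝ) * 2 ^ n * Real.sqrt π) ^ (-(1 : ℝ) / 2) * hermiteR n x *
    Real.exp (-x ^ 2 / 2)

namespace MehlerAux

lemma norm_lin_sq (x t : ℝ) : ‖(x : ℂ) + t * Complex.I‖ ^ 2 = x ^ 2 + t ^ 2 := by
  rw [Complex.sq_norm, Complex.normSq_apply]
  simp
  ring


noncomputable def g (x : ℝ) (n m : ℕ) : ℝ :=
  if 2 * m ≤ n then (n ! : ℝ) * ((-1) ^ m * (2 * x) ^ (n - 2 * m) / ((m ! : ℝ) * ((n - 2 * m)! : ℝ))) else 0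

lemma hermiteR_eq_sum_g (n : ℕ) (x : ℝ) {N : ℕ} (hN : n < N) :
    hermiteR n x = ∑ m ∈ Finset.range N, g x n m := by
  rw [hermiteR, Finset.mul_sum]
  have hsub : Finset.range (n / 2 + 1) ⊆ Finset.range N := by
    intro m hm
    simp only [Finset.mem_range] at hm ⊢
    have := Nat.lt_succ_iff.mp hm
    calc m ≤ n / 2 := this
      _ ≤ n := Nat.div_le_self n 2
      _ < N := hN
  rw [← Finset.sum_subset hsub (fun m _ hm => ?_)]
  · refine Finset.sum_congr rfl fun m hm => ?_
    simp only [Finset.mem_range, Nat.lt_succ_iff, Nat.le_div_iff_mul_le (by norm_num : 0 < 2)] at hm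
    have : 2 * m ≤ n := by omega
    simp [g, this]
  · simp only [Finset.mem_range, Nat.lt_succ_iff, Nat.le_div_iff_mul_le (by norm_num : 0 < 2)] at hm
    have : ¬ 2 * m ≤ n := by omega
    simp [g, this]

lemma g_step (n m : ℕ) (x : ℝ) :
    g x (n+2) (m+1) = 2 * x * g x (n+1) (m+1) - 2 * (n+1) * g x n m := by
  by_cases h : 2 * m ≤ n
  · obtain ⟨k, hk⟩ := Nat.exists_eq_add_of_le h
    subst hk
    cases k with
    | zero =>
      have h1 : 2 * (m+1) ≤ 2 * m + 0 + 2 := by omega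
      have h2 : ¬ 2 * (m+1) ≤ 2 * m + 0 + 1 := by omega
      have h3 : 2 * m ≤ 2 * m + 0 := by omega
      have e1 : 2 * m + 0 + 2 - 2 * (m+1) = 0 := by omega
      have e2 : 2 * m + 0 - 2 * m = 0 := by omega
      simp only [g, if_pos h1, if_neg h2, if_pos h3, e1, e2, pow_zero]
      have f1 : ((2*m+0+2)! : ℝ) = (2*m+2) * ((2*m+1) * ((2*m+0)! : ℝ)) := by
        push_cast [show 2*m+0+2 = (2*m+1)+1 by omega]
        rw [Nat.factorial_succ]
        push_cast [show 2*m+0+1 = (2*m+0)+1 from rfl]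
        rw [Nat.factorial_succ]
        push_cast; ring
      have f2 : ((m+1)! : ℝ) = (m+1) * (m ! : ℝ) := by
        rw [Nat.factorial_succ]; push_cast; ring
      rw [f1, f2]
      have hm : (m ! : ℝ) ≠ 0 := Nat.cast_ne_zero.mpr (Nat.factorial_ne_zero m)
      field_simp
      push_cast; ring
    | succ j =>
      set n := 2 * m + (j+1) with hn
      have h1 : 2 * (m+1) ≤ n + 2 := by omega
      have h2 : 2 * (m+1) ≤ n + 1 := by omega
      have h3 : 2 * m ≤ n := by omega
      have e1 : n + 2 - 2 * (m+1) = j + 1 := by omega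
      have e2 : n + 1 - 2 * (m+1) = j := by omega
      have e3 : n - 2 * m = j + 1 := by omega
      simp only [g, if_pos h1, if_pos h2, if_pos h3, e1, e2, e3]
      have f1 : ((n+2)! : ℝ) = (n+2) * ((n+1) * (n ! : ℝ)) := by
        rw [show n+2 = (n+1)+1 by omega, Nat.factorial_succ, Nat.factorial_succ]; push_cast; ring
      have f2 : ((n+1)! : ℝ) = (n+1) * (n ! : ℝ) := by
        rw [Nat.factorial_succ]; push_cast; ring
      have f3 : ((j+1)! : ℝ) = (j+1) * (j ! : ℝ) := by
        rw [Nat.factorial_succ]; push_cast; ring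
      have f4 : ((m+1)! : ℝ) = (m+1) * (m ! : ℝ) := by
        rw [Nat.factorial_succ]; push_cast; ring
      have p1 : (2*x) ^ (j+1) = 2*x * (2*x)^j := by ring
      rw [f1, f2, f3, f4, p1]
      have hm : (m ! : ℝ) ≠ 0 := Nat.cast_ne_zero.mpr (Nat.factorial_ne_zero m)
      have hj : (j ! : ℝ) ≠ 0 := Nat.cast_ne_zero.mpr (Nat.factorial_ne_zero j)
      have hn1 : ((n:ℝ)+1) ≠ 0 := by positivity
      have hcast : (n : ℝ) = 2*m + (j+1) := by push_cast [hn]; ring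
      field_simp
      rw [hcast]
      ring
  · have h1 : ¬ 2 * (m+1) ≤ n + 2 := by omega
    have h2 : ¬ 2 * (m+1) ≤ n + 1 := by omega
    simp [g, h1, h2, h]

lemma g_zero_step (n : ℕ) (x : ℝ) : g x (n+2) 0 = 2 * x * g x (n+1) 0 := by
  simp only [g, if_pos (by omega : 2*0 ≤ n+2), if_pos (by omega : 2*0 ≤ n+1)]
  have e1 : (n+2) - 2*0 = n + 2 := by omega
  have e2 : (n+1) - 2*0 = n + 1 := by omega
  rw [e1, e2]
  have f1 : ((n+2)! : ℝ) = (n+2) * ((n+1)! : ℝ) := by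
    rw [show n+2 = (n+1)+1 by omega, Nat.factorial_succ]; push_cast; ring
  have p1 : (2*x) ^ (n+2) = 2*x*(2*x)^(n+1) := by ring
  rw [f1, p1]
  have p2 : ((n+1)! : ℝ) ≠ 0 := Nat.cast_ne_zero.mpr (Nat.factorial_ne_zero _)
  field_simp

lemma hermiteR_rec (n : ℕ) (x : ℝ) :
    hermiteR (n+2) x = 2 * x * hermiteR (n+1) x - 2 * (n+1) * hermiteR n x := by
  rw [hermiteR_eq_sum_g (n+2) x (show n+2 < n+3 by omega),
      hermiteR_eq_sum_g (n+1) x (show n+1 < n+3 by omega),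
      hermiteR_eq_sum_g n x (show n < n+2 by omega)]
  rw [Finset.sum_range_succ' (fun m => g x (n+2) m) (n+2),
      Finset.sum_range_succ' (fun m => g x (n+1) m) (n+2)]
  simp only [g_step, g_zero_step]
  rw [Finset.sum_sub_distrib]
  simp only [mul_add, Finset.mul_sum]
  ring

lemma hermiteR_zero (x : ℝ) : hermiteR 0 x = 1 := by
  simp [hermiteR]

lemma hermiteR_one (x : ℝ) : hermiteR 1 x = 2 * x := by
  simp [hermiteR]



noncomputable def Jc (x : ℝ) (n : ℕ) : ℂ :=
  ∫ t : ℝ, ((x : ℂ) + t * Complex.I) ^ n * Complex.exp (-(t : ℂ) ^ 2)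

lemma norm_lin (x t : ℝ) : ‖(x : ℂ) + t * Complex.I‖ ≤ |x| + |t| := by
  calc ‖(x : ℂ) + t * Complex.I‖ ≤ ‖(x : ℂ)‖ + ‖(t : ℂ) * Complex.I‖ := norm_add_le _ _
    _ = |x| + |t| := by simp

lemma norm_cexp_sq (t : ℝ) : ‖Complex.exp (-(t:ℂ) ^ 2)‖ = Real.exp (-t ^ 2) := by
  rw [show -(t:ℂ)^2 = ((-t^2 : ℝ) : ℂ) by push_cast; ring,
    Complex.norm_exp, Complex.ofReal_re]

lemma integrable_master (x : ℝ) (m : ℕ) :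
    Integrable fun t : ℝ => (|x| + |t|) ^ m * Real.exp (-t ^ 2) := by
  have habs : ∀ k : ℕ, Integrable fun t : ℝ => |t| ^ k * Real.exp (-t ^ 2) := by
    intro k
    have h1 : Integrable fun t : ℝ => t ^ (k : ℝ) * Real.exp (-1 * t ^ 2) :=
      integrable_rpow_mul_exp_neg_mul_sq one_pos
        (lt_of_lt_of_le neg_one_lt_zero (by positivity))
    have h2 : Integrable fun t : ℝ => t ^ k * Real.exp (-t ^ 2) := by
      simpa [Real.rpow_natCast] using h1
    have := h2.abs
    simpa [abs_mul, abs_pow, Real.abs_exp] using this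
  have : Integrable fun t : ℝ =>
      ∑ k ∈ Finset.range (m + 1), |x| ^ k * (m.choose k : ℝ) * (|t| ^ (m - k) * Real.exp (-t ^ 2)) := by
    apply integrable_finset_sum
    intro k _
    exact ((habs (m - k)).const_mul _)
  apply this.congr
  filter_upwards with t
  rw [add_pow]
  rw [Finset.sum_mul]
  refine Finset.sum_congr rfl fun k _ => ?_
  ring

lemma integrable_pg (x : ℝ) (n : ℕ) :
    Integrable fun t : ℝ => ((x : ℂ) + t * Complex.I) ^ n * Complex.exp (-(t : ℂ) ^ 2) := by
  refine (integrable_master x n).mono' ?_ ?_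
  · apply Continuous.aestronglyMeasurable
    continuity
  · filter_upwards with t
    rw [norm_mul, norm_pow, norm_cexp_sq]
    exact mul_le_mul_of_nonneg_right
      (pow_le_pow_left₀ (norm_nonneg _) (norm_lin x t) n) (Real.exp_pos _).le

lemma integrable_tpg (x : ℝ) (n : ℕ) :
    Integrable fun t : ℝ => (t : ℂ) * ((x : ℂ) + t * Complex.I) ^ n * Complex.exp (-(t : ℂ) ^ 2) := by
  refine (integrable_master x (n+1)).mono' ?_ ?_
  · apply Continuous.aestronglyMeasurable
    continuity
  · filter_upwards with t
    rw [norm_mul, norm_mul, norm_pow, norm_cexp_sq]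
    have h2 : ‖(t:ℂ)‖ = |t| := by simp
    rw [h2, show (|x| + |t|) ^ (n+1) = (|x| + |t|) * (|x| + |t|) ^ n by ring]
    refine mul_le_mul_of_nonneg_right ?_ (Real.exp_pos _).le
    exact mul_le_mul (le_add_of_nonneg_left (abs_nonneg x))
      (pow_le_pow_left₀ (norm_nonneg _) (norm_lin x t) n) (by positivity) (by positivity)

lemma hasDerivAt_F (x : ℝ) (m : ℕ) (t : ℝ) :
    HasDerivAt (fun s : ℝ => ((x : ℂ) + s * Complex.I) ^ (m+1) * Complex.exp (-(s : ℂ) ^ 2))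
      (((m:ℂ)+1) * Complex.I * (((x : ℂ) + t * Complex.I) ^ m * Complex.exp (-(t : ℂ) ^ 2))
        - 2 * t * (((x : ℂ) + t * Complex.I) ^ (m+1) * Complex.exp (-(t : ℂ) ^ 2))) t := by
  have hG : HasDerivAt (fun z : ℂ => ((x : ℂ) + z * Complex.I) ^ (m+1) * Complex.exp (-z ^ 2))
      (((m:ℂ)+1) * (((x : ℂ) + (t:ℂ) * Complex.I) ^ m * Complex.I) * Complex.exp (-(t:ℂ) ^ 2)
        + ((x : ℂ) + (t:ℂ) * Complex.I) ^ (m+1) * ((-2 * (t:ℂ)) * Complex.exp (-(t:ℂ) ^ 2))) (t:ℂ) := by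
    have h1 : HasDerivAt (fun z : ℂ => (x : ℂ) + z * Complex.I) Complex.I (t:ℂ) := by
      simpa using ((hasDerivAt_id (t:ℂ)).mul_const Complex.I).const_add (x:ℂ)
    have h2 : HasDerivAt (fun z : ℂ => ((x : ℂ) + z * Complex.I) ^ (m+1))
        (((m:ℂ)+1) * (((x : ℂ) + (t:ℂ) * Complex.I) ^ m * Complex.I)) (t:ℂ) := by
      have := h1.fun_pow (m+1)
      simpa [mul_comm, mul_assoc, Nat.cast_add] using this
    have h3 : HasDerivAt (fun z : ℂ => Complex.exp (-z ^ 2))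
        ((-2 * (t:ℂ)) * Complex.exp (-(t:ℂ) ^ 2)) (t:ℂ) := by
      have hq : HasDerivAt (fun z : ℂ => -z ^ 2) (-2 * (t:ℂ)) (t:ℂ) := by
        simpa using ((hasDerivAt_pow 2 (t:ℂ))).fun_neg
      simpa [mul_comm] using hq.cexp
    exact h2.mul h3
  have := hG.comp_ofReal
  convert this using 1
  ring

lemma integral_deriv_zero (x : ℝ) (m : ℕ) :
    (((m:ℂ)+1) * Complex.I) * Jc x m
      = 2 * ∫ t : ℝ, (t : ℂ) * ((x : ℂ) + t * Complex.I) ^ (m+1) * Complex.exp (-(t : ℂ) ^ 2) := by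
  have hF' : Integrable (fun t : ℝ =>
      ((m:ℂ)+1) * Complex.I * (((x : ℂ) + t * Complex.I) ^ m * Complex.exp (-(t : ℂ) ^ 2))
        - 2 * t * (((x : ℂ) + t * Complex.I) ^ (m+1) * Complex.exp (-(t : ℂ) ^ 2))) := by
    refine Integrable.sub ((integrable_pg x m).const_mul _) ?_
    have := (integrable_tpg x (m+1)).const_mul (2:ℂ)
    apply this.congr
    filter_upwards with t
    ring
  have hzero := integral_eq_zero_of_hasDerivAt_of_integrable (fun t => hasDerivAt_F x m t) hF'
    (integrable_pg x (m+1))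
  rw [integral_sub ((integrable_pg x m).const_mul _)] at hzero
  swap
  · have := (integrable_tpg x (m+1)).const_mul (2:ℂ)
    apply this.congr
    filter_upwards with t
    ring
  have h1 : ∫ t : ℝ, ((m:ℂ)+1) * Complex.I * (((x : ℂ) + t * Complex.I) ^ m * Complex.exp (-(t : ℂ) ^ 2))
      = (((m:ℂ)+1) * Complex.I) * Jc x m := integral_const_mul _ _
  have h2 : (∫ t : ℝ, 2 * (t:ℂ) * (((x : ℂ) + t * Complex.I) ^ (m+1) * Complex.exp (-(t : ℂ) ^ 2)))
      = 2 * ∫ t : ℝ, (t : ℂ) * ((x : ℂ) + t * Complex.I) ^ (m+1) * Complex.exp (-(t : ℂ) ^ 2) := by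
    rw [← integral_const_mul]
    congr 1
    funext t
    ring
  rw [h1] at hzero
  rw [sub_eq_zero] at hzero
  rw [hzero, ← h2]

lemma key0 (x : ℝ) : (∫ t : ℝ, (t : ℂ) * Complex.exp (-(t : ℂ) ^ 2)) = 0 := by
  have hd : ∀ t : ℝ, HasDerivAt (fun s : ℝ => Complex.exp (-(s:ℂ) ^ 2) * (-(1:ℂ)/2))
      ((t : ℂ) * Complex.exp (-(t : ℂ) ^ 2)) t := by
    intro t
    have hG : HasDerivAt (fun z : ℂ => Complex.exp (-z ^ 2) * (-(1:ℂ)/2))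
        ((-2 * (t:ℂ)) * Complex.exp (-(t:ℂ) ^ 2) * (-(1:ℂ)/2)) (t:ℂ) := by
      have hq : HasDerivAt (fun z : ℂ => -z ^ 2) (-2 * (t:ℂ)) (t:ℂ) := by
        simpa using ((hasDerivAt_pow 2 (t:ℂ))).fun_neg
      simpa [mul_comm] using (hq.cexp).mul_const (-(1:ℂ)/2)
    have := hG.comp_ofReal
    convert this using 1
    ring
  have hint : Integrable fun t : ℝ => (t : ℂ) * Complex.exp (-(t : ℂ) ^ 2) := by
    have := integrable_tpg 0 0
    simpa using this
  have hF : Integrable fun t : ℝ => Complex.exp (-(t:ℂ) ^ 2) * (-(1:ℂ)/2) := by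
    have := integrable_pg 0 0
    simp only [pow_zero, one_mul] at this
    exact this.mul_const _
  exact integral_eq_zero_of_hasDerivAt_of_integrable hd hint hF

lemma Jc_zero (x : ℝ) : Jc x 0 = (Real.sqrt π : ℝ) := by
  rw [Jc]
  simp only [pow_zero, one_mul]
  have h : ∀ t : ℝ, Complex.exp (-(t:ℂ)^2) = ((Real.exp (-1 * t^2) : ℝ) : ℂ) := by
    intro t
    rw [Complex.ofReal_exp]
    push_cast
    ring_nf
  simp_rw [h]
  rw [show (∫ t : ℝ, ((Real.exp (-1 * t^2) : ℝ) : ℂ)) = ((∫ t : ℝ, Real.exp (-1 * t^2) : ℝ) : ℂ)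
    from integral_ofReal]
  rw [integral_gaussian 1]
  norm_num

lemma Jc_succ (x : ℝ) (n : ℕ) :
    Jc x (n+1) = x * Jc x n
      + Complex.I * ∫ t : ℝ, (t : ℂ) * ((x : ℂ) + t * Complex.I) ^ n * Complex.exp (-(t : ℂ) ^ 2) := by
  rw [Jc, Jc]
  have : ∀ t : ℝ, ((x : ℂ) + t * Complex.I) ^ (n+1) * Complex.exp (-(t : ℂ) ^ 2)
      = x * (((x : ℂ) + t * Complex.I) ^ n * Complex.exp (-(t : ℂ) ^ 2))
        + Complex.I * ((t : ℂ) * ((x : ℂ) + t * Complex.I) ^ n * Complex.exp (-(t : ℂ) ^ 2)) := by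
    intro t
    ring
  simp_rw [this]
  rw [integral_add (((integrable_pg x n).const_mul _)) (((integrable_tpg x n).const_mul _))]
  rw [integral_const_mul, integral_const_mul]

lemma Jc_one (x : ℝ) : Jc x 1 = x * Real.sqrt π := by
  rw [Jc_succ, Jc_zero]
  simp only [pow_zero]
  have : (∫ t : ℝ, (t : ℂ) * 1 * Complex.exp (-(t : ℂ) ^ 2)) = 0 := by
    simp_rw [mul_one]
    exact key0 x
  rw [this, mul_zero, add_zero]

lemma Jc_rec (x : ℝ) (n : ℕ) :
    Jc x (n+2) = x * Jc x (n+1) - (((n:ℂ)+1)/2) * Jc x n := by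
  rw [Jc_succ x (n+1)]
  have hkey := integral_deriv_zero x n
  have h2 : (∫ t : ℝ, (t : ℂ) * ((x : ℂ) + t * Complex.I) ^ (n+1) * Complex.exp (-(t : ℂ) ^ 2))
      = (((n:ℂ)+1) * Complex.I) * Jc x n / 2 := by
    linear_combination -hkey/2
  rw [h2]
  linear_combination (Jc x n * ((n:ℂ)+1)/2) * Complex.I_sq

section Core

variable (s x : ℝ) (hs0 : 0 < s) (hs1 : s < 1)

noncomputable def f1 (n : ℕ) (t : ℝ) : ℂ :=
  ((x : ℂ) + t * Complex.I) ^ n * Complex.exp (-(t : ℂ) ^ 2)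

noncomputable def Fn (n : ℕ) (p : ℝ × ℝ) : ℂ :=
  (((2*s)^n / n ! : ℝ) : ℂ) * (f1 x n p.1 * f1 x n p.2)

lemma norm_f1 (n : ℕ) (t : ℝ) :
    ‖f1 x n t‖ = ‖(x : ℂ) + t * Complex.I‖ ^ n * Real.exp (-t ^ 2) := by
  rw [f1, norm_mul, norm_pow, norm_cexp_sq]

lemma integrable_f1 (n : ℕ) : Integrable (f1 x n) := integrable_pg x n

lemma integrable_Fn (n : ℕ) : Integrable (Fn s x n) := by
  unfold Fn
  rw [Measure.volume_eq_prod]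
  have h := ((integrable_f1 x n).const_mul (((2*s)^n / n ! : ℝ) : ℂ)).mul_prod (integrable_f1 x n)
  apply h.congr
  filter_upwards with p
  ring

lemma integral_Fn (n : ℕ) :
    (∫ p : ℝ × ℝ, Fn s x n p) = (((2*s)^n / n ! : ℝ) : ℂ) * (Jc x n)^2 := by
  unfold Fn
  rw [MeasureTheory.integral_const_mul]
  have h1 : (∫ p : ℝ × ℝ, f1 x n p.1 * f1 x n p.2) = (∫ t : ℝ, f1 x n t) * ∫ t : ℝ, f1 x n t := by
    rw [Measure.volume_eq_prod]
    exact integral_prod_mul (f1 x n) (f1 x n)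
  rw [h1]
  have hJ : Jc x n = ∫ t : ℝ, f1 x n t := rfl
  rw [hJ, sq]

include hs0 in
lemma coef_nonneg (n : ℕ) : (0:ℝ) ≤ (2*s)^n / n ! :=
  div_nonneg (pow_nonneg (by linarith) n) (Nat.cast_nonneg _)

include hs0 in
lemma norm_integral_Fn (n : ℕ) :
    (∫ p : ℝ × ℝ, ‖Fn s x n p‖)
      = ((2*s)^n / n !) * (∫ t : ℝ, ‖(x : ℂ) + t * Complex.I‖ ^ n * Real.exp (-t ^ 2)) ^ 2 := by
  have h2s : (0:ℝ) ≤ (2*s)^n / n ! := coef_nonneg s hs0 n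
  have h : ∀ p : ℝ × ℝ, ‖Fn s x n p‖
      = (((2*s)^n / n !) * (‖(x : ℂ) + p.1 * Complex.I‖ ^ n * Real.exp (-p.1 ^ 2)))
         * (‖(x : ℂ) + p.2 * Complex.I‖ ^ n * Real.exp (-p.2 ^ 2)) := by
    intro p
    rw [Fn, norm_mul, norm_mul, norm_f1, norm_f1, Complex.norm_real, Real.norm_of_nonneg h2s]
    ring
  simp_rw [h]
  rw [Measure.volume_eq_prod]
  rw [integral_prod_mul
    (fun t : ℝ => ((2*s)^n / n !) * (‖(x : ℂ) + t * Complex.I‖ ^ n * Real.exp (-t ^ 2)))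
    (fun t : ℝ => ‖(x : ℂ) + t * Complex.I‖ ^ n * Real.exp (-t ^ 2))]
  rw [MeasureTheory.integral_const_mul]
  ring

noncomputable def gdom (t : ℝ) : ℝ := Real.exp (s*x^2) * Real.exp (-(1-s)*t^2)

include hs1 in
lemma integrable_gdom : Integrable (gdom s x) :=
  (integrable_exp_neg_mul_sq (by linarith)).const_mul _

include hs0 in
lemma sum_norm_le (N : ℕ) (t u : ℝ) :
    ∑ n ∈ Finset.range N,
      ((2*s)^n / n !) * ((‖(x : ℂ) + t * Complex.I‖ * ‖(x : ℂ) + u * Complex.I‖) ^ n)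
      ≤ Real.exp (s*x^2 + s*t^2) * Real.exp (s*x^2 + s*u^2) := by
  have h1 : ∑ n ∈ Finset.range N,
      ((2*s)^n / n !) * ((‖(x : ℂ) + t * Complex.I‖ * ‖(x : ℂ) + u * Complex.I‖) ^ n)
      = ∑ n ∈ Finset.range N,
        (2*s*(‖(x : ℂ) + t * Complex.I‖ * ‖(x : ℂ) + u * Complex.I‖))^n / n ! := by
    refine Finset.sum_congr rfl fun n _ => ?_
    rw [mul_pow]
    ring
  rw [h1]
  have hab : (0:ℝ) ≤ 2*s*(‖(x : ℂ) + t * Complex.I‖ * ‖(x : ℂ) + u * Complex.I‖) := by positivity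
  refine (Real.sum_le_exp_of_nonneg hab N).trans ?_
  rw [← Real.exp_add]
  apply Real.exp_le_exp.mpr
  have h3 : 2*(‖(x : ℂ) + t * Complex.I‖ * ‖(x : ℂ) + u * Complex.I‖)
      ≤ ‖(x : ℂ) + t * Complex.I‖^2 + ‖(x : ℂ) + u * Complex.I‖^2 := by
    have := two_mul_le_add_sq ‖(x : ℂ) + t * Complex.I‖ ‖(x : ℂ) + u * Complex.I‖
    nlinarith
  have h4 : s*(2*(‖(x : ℂ) + t * Complex.I‖ * ‖(x : ℂ) + u * Complex.I‖))
      ≤ s*(‖(x : ℂ) + t * Complex.I‖^2 + ‖(x : ℂ) + u * Complex.I‖^2) :=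
    mul_le_mul_of_nonneg_left h3 hs0.le
  rw [norm_lin_sq, norm_lin_sq] at h4
  nlinarith [h4]

include hs0 hs1 in
lemma summable_norm_Fn : Summable (fun n => ∫ p : ℝ × ℝ, ‖Fn s x n p‖) := by
  have hnonneg : ∀ n, 0 ≤ ∫ p : ℝ × ℝ, ‖Fn s x n p‖ :=
    fun n => integral_nonneg (fun p => norm_nonneg _)
  apply summable_of_sum_range_le hnonneg (c := ∫ p : ℝ × ℝ, gdom s x p.1 * gdom s x p.2)
  intro N
  have hint : ∀ n, Integrable (fun p : ℝ × ℝ => ‖Fn s x n p‖) := fun n => (integrable_Fn s x n).norm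
  rw [← MeasureTheory.integral_finset_sum _ (fun n _ => hint n)]
  have hgg : Integrable (fun p : ℝ × ℝ => gdom s x p.1 * gdom s x p.2) := by
    rw [Measure.volume_eq_prod]
    exact (integrable_gdom s x hs1).mul_prod (integrable_gdom s x hs1)
  apply integral_mono (integrable_finset_sum _ (fun n _ => hint n)) hgg
  intro p
  have hFn : ∀ n, ‖Fn s x n p‖ = ((2*s)^n / n !) *
      ((‖(x : ℂ) + p.1 * Complex.I‖ * ‖(x : ℂ) + p.2 * Complex.I‖) ^ n)
        * (Real.exp (-p.1 ^ 2) * Real.exp (-p.2 ^ 2)) := by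
    intro n
    rw [Fn, norm_mul, norm_mul, norm_f1, norm_f1, Complex.norm_real,
      Real.norm_of_nonneg (coef_nonneg s hs0 n), mul_pow]
    ring
  simp only [hFn]
  rw [← Finset.sum_mul]
  calc _ ≤ (Real.exp (s*x^2 + s*p.1^2) * Real.exp (s*x^2 + s*p.2^2))
          * (Real.exp (-p.1 ^ 2) * Real.exp (-p.2 ^ 2)) :=
        mul_le_mul_of_nonneg_right (sum_norm_le s x hs0 N p.1 p.2) (by positivity)
    _ = gdom s x p.1 * gdom s x p.2 := by
        simp only [gdom, ← Real.exp_add]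
        ring_nf

end Core

section Core2
variable (s x : ℝ) (hs0 : 0 < s) (hs1 : s < 1)

noncomputable def Q (p : ℝ × ℝ) : ℂ :=
  2*s*((x:ℂ)+p.1*Complex.I)*((x:ℂ)+p.2*Complex.I) - (p.1:ℂ)^2 - (p.2:ℂ)^2

lemma Q_decomp (p : ℝ × ℝ) :
    Q s x p = ((2*s*x^2 - 2*s*p.1*p.2 - p.1^2 - p.2^2 : ℝ) : ℂ)
      + ((2*s*x*(p.1+p.2) : ℝ) : ℂ) * Complex.I := by
  rw [Q]
  push_cast
  linear_combination (2*(s:ℂ)*(p.1:ℂ)*(p.2:ℂ)) * Complex.I_sq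

lemma norm_cexp_Q (p : ℝ × ℝ) :
    ‖Complex.exp (Q s x p)‖ = Real.exp (2*s*x^2 - 2*s*p.1*p.2 - p.1^2 - p.2^2) := by
  rw [Q_decomp, Complex.norm_exp, Complex.add_re, Complex.ofReal_re,
    Complex.re_ofReal_mul, Complex.I_re, mul_zero, add_zero]

include hs0 hs1 in
lemma integrable_cexp_Q : Integrable (fun p : ℝ × ℝ => Complex.exp (Q s x p)) := by
  have hmeas : AEStronglyMeasurable (fun p : ℝ × ℝ => Complex.exp (Q s x p)) volume := by
    apply Continuous.aestronglyMeasurable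
    apply Complex.continuous_exp.comp
    unfold Q
    continuity
  have hgg : Integrable (fun p : ℝ × ℝ => gdom s x p.1 * gdom s x p.2) := by
    rw [Measure.volume_eq_prod]
    exact (integrable_gdom s x hs1).mul_prod (integrable_gdom s x hs1)
  refine hgg.mono' hmeas ?_
  filter_upwards with p
  rw [norm_cexp_Q]
  rw [gdom, gdom, ← Real.exp_add, ← Real.exp_add, ← Real.exp_add]
  apply Real.exp_le_exp.mpr
  nlinarith [sq_nonneg (p.1 + p.2), sq_nonneg (p.1 - p.2), hs0.le]

lemma cpow_half_ofReal (r : ℝ) (hr : 0 ≤ r) :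
    ((r : ℂ)) ^ (1/2 : ℂ) = ((Real.sqrt r : ℝ) : ℂ) := by
  rw [show (1/2 : ℂ) = ((1/2 : ℝ) : ℂ) by norm_num, ← Complex.ofReal_cpow hr,
    Real.sqrt_eq_rpow]

include hs0 hs1 in
lemma integral_Q_eq :
    (∫ p : ℝ × ℝ, Complex.exp (Q s x p))
      = (((Real.sqrt π * Real.sqrt (π/(1-s^2)) * Real.exp (2*s*x^2/(1+s))) : ℝ) : ℂ) := by
  have hprod := MeasureTheory.integral_prod (fun p : ℝ × ℝ => Complex.exp (Q s x p))
    (by rw [← Measure.volume_eq_prod]; exact integrable_cexp_Q s x hs0 hs1)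
  rw [Measure.volume_eq_prod]
  rw [hprod]
  have hinner : ∀ t : ℝ, (∫ u : ℝ, Complex.exp (Q s x (t, u)))
      = (π:ℂ) ^ (1/2 : ℂ) * Complex.exp (((s^2-1 : ℝ) : ℂ) * (t:ℂ)^2
          + (((2*s*x-2*s^2*x : ℝ) : ℂ) * Complex.I) * (t:ℂ) + ((2*s*x^2-s^2*x^2 : ℝ) : ℂ)) := by
    intro t
    have hq : ∀ u : ℝ, Q s x (t, u) = (-1:ℂ)*(u:ℂ)^2
        + ((2*s*x:ℝ)*Complex.I - (2*s*t:ℝ))*(u:ℂ)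
        + (((2*s*x^2:ℝ):ℂ) + ((2*s*x*t:ℝ):ℂ)*Complex.I - (t:ℂ)^2) := by
      intro u
      rw [Q]
      push_cast
      linear_combination (2*(s:ℂ)*(t:ℂ)*(u:ℂ)) * Complex.I_sq
    simp_rw [hq]
    rw [integral_cexp_quadratic (by norm_num : (-1:ℂ).re < 0)]
    have hbase : ((π:ℂ) / -(-1)) = (π:ℂ) := by norm_num
    rw [hbase]
    congr 1
    have hc2 : (((2*s*x:ℝ))*Complex.I - ((2*s*t:ℝ)):ℂ)^2
        = -(((2*s*x:ℝ):ℂ))^2 - 2*((2*s*x:ℝ):ℂ)*((2*s*t:ℝ):ℂ)*Complex.I + (((2*s*t:ℝ):ℂ))^2 := by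
      linear_combination (((2*s*x:ℝ):ℂ))^2 * Complex.I_sq
    rw [hc2]
    push_cast
    ring
  simp_rw [hinner]
  rw [MeasureTheory.integral_const_mul]
  have houter : (∫ t : ℝ, Complex.exp (((s^2-1 : ℝ) : ℂ) * (t:ℂ)^2
      + (((2*s*x-2*s^2*x : ℝ) : ℂ) * Complex.I) * (t:ℂ) + ((2*s*x^2-s^2*x^2 : ℝ) : ℂ)))
      = ((π:ℂ) / -((s^2-1 : ℝ) : ℂ)) ^ (1/2 : ℂ)
        * Complex.exp (((2*s*x^2-s^2*x^2 : ℝ) : ℂ)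
          - ((((2*s*x-2*s^2*x : ℝ) : ℂ) * Complex.I))^2 / (4 * ((s^2-1 : ℝ) : ℂ))) :=
    integral_cexp_quadratic (by rw [Complex.ofReal_re]; nlinarith) _ _
  rw [houter]
  have hs2 : (1:ℝ) - s^2 > 0 := by nlinarith
  have hbase2 : ((π:ℂ) / -((s^2-1 : ℝ) : ℂ)) = (((π/(1-s^2) : ℝ)) : ℂ) := by
    push_cast
    ring
  rw [hbase2, cpow_half_ofReal (π/(1-s^2)) (by positivity)]
  have hc2sq : ((((2*s*x-2*s^2*x : ℝ) : ℂ) * Complex.I))^2 = -(((2*s*x-2*s^2*x : ℝ) : ℂ))^2 := by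
    rw [mul_pow, Complex.I_sq]
    ring
  rw [hc2sq]
  have hreal : ((2*s*x^2-s^2*x^2 : ℝ)) - (-((2*s*x-2*s^2*x : ℝ))^2) / (4 * ((s^2-1 : ℝ)))
      = 2*s*x^2/(1+s) := by
    have h1 : (s:ℝ)^2 - 1 ≠ 0 := by nlinarith
    have h2 : (1:ℝ) + s ≠ 0 := by nlinarith
    field_simp
    ring
  have hexp : (((2*s*x^2-s^2*x^2 : ℝ)) : ℂ)
      - (-(((2*s*x-2*s^2*x : ℝ) : ℂ))^2) / (4 * ((s^2-1 : ℝ) : ℂ))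
      = (((2*s*x^2/(1+s)) : ℝ) : ℂ) := by
    rw [← hreal]
    have h1 : (((s^2-1 : ℝ)) : ℂ) ≠ 0 := by
      simp only [ne_eq, Complex.ofReal_eq_zero]
      nlinarith
    push_cast
    ring
  rw [hexp]
  rw [cpow_half_ofReal π Real.pi_pos.le, ← Complex.ofReal_exp]
  push_cast
  ring

include hs0 hs1 in
lemma hasSum_Jc_sq :
    HasSum (fun n : ℕ => (((2*s)^n / n ! : ℝ) : ℂ) * (Jc x n)^2)
      (((Real.sqrt π * Real.sqrt (π/(1-s^2)) * Real.exp (2*s*x^2/(1+s))) : ℝ) : ℂ) := by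
  have key := hasSum_integral_of_summable_integral_norm (μ := (volume : Measure (ℝ × ℝ)))
    (fun n => integrable_Fn s x n) (summable_norm_Fn s x hs0 hs1)
  have hpt : ∀ p : ℝ × ℝ, ∑' n : ℕ, Fn s x n p = Complex.exp (Q s x p) := by
    intro p
    set z : ℂ := 2*(s:ℂ)*((x:ℂ)+p.1*Complex.I)*((x:ℂ)+p.2*Complex.I) with hzdef
    have hz : HasSum (fun n : ℕ => z^n / n !) (Complex.exp z) := by
      have h1 := (NormedSpace.expSeries_div_summable z).hasSum
      have h2 : NormedSpace.exp z = ∑' n : ℕ, z^n / n ! :=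
        congrFun NormedSpace.exp_eq_tsum_div z
      rw [← h2] at h1
      rw [Complex.exp_eq_exp_ℂ]
      exact h1
    have hmul := hz.mul_right (Complex.exp (-(p.1:ℂ)^2) * Complex.exp (-(p.2:ℂ)^2))
    have hfn : (fun n : ℕ => Fn s x n p)
        = fun n : ℕ => z^n / n ! * (Complex.exp (-(p.1:ℂ)^2) * Complex.exp (-(p.2:ℂ)^2)) := by
      funext n
      rw [Fn, f1, f1, hzdef]
      push_cast [mul_pow]
      ring
    rw [hfn]
    rw [hmul.tsum_eq]
    rw [← Complex.exp_add, ← Complex.exp_add]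
    congr 1
    rw [Q, hzdef]
    ring
  simp_rw [hpt, integral_Fn s x] at key
  rwa [integral_Q_eq s x hs0 hs1] at key

end Core2


lemma hermite_eq (x : ℝ) (n : ℕ) :
    ((hermiteR n x : ℝ) : ℂ) * ((Real.sqrt π : ℝ) : ℂ) = (2:ℂ)^n * Jc x n := by
  suffices h : ∀ m : ℕ, (((hermiteR m x : ℝ):ℂ) * ((Real.sqrt π : ℝ):ℂ) = (2:ℂ)^m * Jc x m) ∧
      (((hermiteR (m+1) x : ℝ):ℂ) * ((Real.sqrt π : ℝ):ℂ) = (2:ℂ)^(m+1) * Jc x (m+1)) from (h n).1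
  intro m
  induction m with
  | zero =>
    constructor
    · rw [hermiteR_zero, Jc_zero]; push_cast; ring
    · rw [hermiteR_one, Jc_one]; push_cast; ring
  | succ k ih =>
    refine ⟨ih.2, ?_⟩
    rw [hermiteR_rec, Jc_rec]
    push_cast
    push_cast at ih
    linear_combination 2*(x:ℂ)*ih.2 - 2*((k:ℂ)+1)*ih.1


end MehlerAux

theorem stmt_9 (ε : ℝ) (hε : 0 < ε) (hε1 : ε < 1) (y : ℝ) :
    HasSum (fun n : ℕ => ε ^ n * hermiteFunR n y ^ 2)
      (1 / Real.sqrt ((1 - ε ^ 2) * π) * Real.exp ((ε - 1) / (ε + 1) * y ^ 2)) := by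
  have hcore := MehlerAux.hasSum_Jc_sq ε y hε hε1
  have hsqpi : ((Real.sqrt π : ℝ) : ℂ)^2 = (π : ℂ) := by
    rw [← Complex.ofReal_pow, Real.sq_sqrt Real.pi_pos.le]
  have hterm : ∀ n : ℕ, (((2*ε)^n / n ! : ℝ) : ℂ) * (MehlerAux.Jc y n)^2
      = (((ε/2)^n / n ! * π * hermiteR n y ^2 : ℝ) : ℂ) := by
    intro n
    have h := MehlerAux.hermite_eq y n
    have h2n : ((2:ℂ))^n ≠ 0 := pow_ne_zero _ two_ne_zero
    have h2 : MehlerAux.Jc y n = ((hermiteR n y : ℝ):ℂ) * ((Real.sqrt π : ℝ):ℂ) / 2^n := by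
      field_simp
      linear_combination -h
    rw [h2]
    push_cast
    have hfact : ((n ! : ℝ) : ℂ) ≠ 0 := by
      exact_mod_cast Nat.cast_ne_zero.mpr (Nat.factorial_ne_zero n)
    have e1 : (((hermiteR n y : ℝ):ℂ) * ((Real.sqrt π : ℝ):ℂ) / 2^n)^2
        = (((hermiteR n y : ℝ):ℂ)^2 * (π:ℂ)) / ((2:ℂ)^n)^2 := by
      rw [div_pow, mul_pow, hsqpi]
    rw [e1, mul_pow (2:ℂ) (ε:ℂ) n, div_pow (ε:ℂ) 2 n]
    field_simp
  simp_rw [hterm] at hcore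
  have hreal : HasSum (fun n : ℕ => (ε/2)^n / n ! * π * hermiteR n y ^2)
      (Real.sqrt π * Real.sqrt (π/(1-ε^2)) * Real.exp (2*ε*y^2/(1+ε))) :=
    Complex.hasSum_ofReal.mp hcore
  set k : ℝ := Real.exp (-y^2) / (π * Real.sqrt π) with hk
  have h2 := hreal.mul_right k
  have hsπ : (0:ℝ) < Real.sqrt π := Real.sqrt_pos.mpr Real.pi_pos
  have hfun : (fun n : ℕ => ε ^ n * hermiteFunR n y ^ 2)
      = fun n : ℕ => ((ε/2)^n / n ! * π * hermiteR n y ^2) * k := by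
    funext n
    rw [hermiteFunR, hk]
    have hc : (0:ℝ) < (n ! : ℝ) * 2^n * Real.sqrt π := by positivity
    have hrp : (((n ! : ℝ) * 2^n * Real.sqrt π) ^ (-(1:ℝ)/2))^2
        = (((n ! : ℝ)) * 2^n * Real.sqrt π)⁻¹ := by
      rw [sq, ← Real.rpow_add hc]
      norm_num [Real.rpow_neg_one]
    have he : Real.exp (-y^2/2)^2 = Real.exp (-y^2) := by
      rw [sq, ← Real.exp_add]
      congr 1
      ring
    rw [mul_pow, mul_pow, hrp, he, div_pow (ε:ℝ) 2 n]
    have hfact : ((n ! : ℝ)) ≠ 0 := Nat.cast_ne_zero.mpr (Nat.factorial_ne_zero n)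
    field_simp
  rw [hfun]
  have hlim : Real.sqrt π * Real.sqrt (π/(1-ε^2)) * Real.exp (2*ε*y^2/(1+ε)) * k
      = 1 / Real.sqrt ((1 - ε ^ 2) * π) * Real.exp ((ε - 1) / (ε + 1) * y ^ 2) := by
    have h1 : (0:ℝ) < 1 - ε^2 := by nlinarith
    have h2' : Real.sqrt (π/(1-ε^2)) = Real.sqrt π / Real.sqrt (1-ε^2) :=
      Real.sqrt_div Real.pi_pos.le _
    have h3 : Real.sqrt ((1 - ε^2) * π) = Real.sqrt (1-ε^2) * Real.sqrt π :=
      Real.sqrt_mul h1.le _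
    have h4 : (0:ℝ) < Real.sqrt (1-ε^2) := Real.sqrt_pos.mpr h1
    have h5 : Real.exp (2*ε*y^2/(1+ε)) * Real.exp (-y^2) = Real.exp ((ε - 1) / (ε + 1) * y ^ 2) := by
      rw [← Real.exp_add]
      congr 1
      have : (1:ℝ) + ε ≠ 0 := by nlinarith
      field_simp
      ring
    rw [hk, h2', h3]
    rw [show Real.sqrt π * (Real.sqrt π / Real.sqrt (1-ε^2)) * Real.exp (2*ε*y^2/(1+ε))
        * (Real.exp (-y^2) / (π * Real.sqrt π))
        = (Real.sqrt π * Real.sqrt π / (π * Real.sqrt π * Real.sqrt (1-ε^2)))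
          * (Real.exp (2*ε*y^2/(1+ε)) * Real.exp (-y^2)) by ring, h5]
    have h6 : Real.sqrt π * Real.sqrt π = π := Real.mul_self_sqrt Real.pi_pos.le
    rw [h6]
    have hπ : (π:ℝ) ≠ 0 := Real.pi_ne_zero
    field_simp
  rw [← hlim]
  exact h2
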